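/- Let G be a connected finite simple graph that is not complete. Then there exists an optimal treedepth decomposition T of G (a rooted tree of height td(G)) whose top separator ts(T) is a minimal separator of G. -/

import Mathlib

open SimpleGraph

attribute [local instance] Classical.propDecidable

noncomputable section

/-- A rooted forest on a vertex type `V`, given by a parent map together with a
depth function (the depth of a root is `1`, and the depth of a child is the depth
of its parent plus one).  The existence of such a depth function guarantees that
the parent map is acyclic, i.e. that the structure really is a rooted forest. -/
structure RootedForest (V : Type) where
  parent : V → Option V
  depth : V → ℕ
  depth_root : ∀ v, parent v = none → depth v = 1
  depth_parent : ∀ v u, parent v = some u → depth v = depth u + 1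

namespace RootedForest

variable {V : Type}

/-- `T.Ancestor u v` means that `u` is a (reflexive) ancestor of `v` in `T`. -/
def Ancestor (T : RootedForest V) (u v : V) : Prop :=
  Relation.ReflTransGen (fun a b => T.parent a = some b) v u

/-- The height of a rooted forest: the maximum number of vertices on a
root-to-leaf path of one of its trees (0 for the empty forest). -/
def height (T : RootedForest V) [Fintype V] : ℕ :=
  Finset.univ.sup T.depth

/-- The number of children of a vertex. -/
def childCount (T : RootedForest V) [Fintype V] (u : V) : ℕ :=
  (Finset.univ.filter (fun v => T.parent v = some u)).card

/-- The set of vertices of depth at most `d` in `T`. -/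
def top (T : RootedForest V) (d : ℕ) : Set V := {v | T.depth v ≤ d}

/-- `T` is a rooted tree if it has exactly one root. -/
def IsTree (T : RootedForest V) : Prop := ∃! r, T.parent r = none

/-- The top separator of a rooted tree `T`: if no vertex of `T` has more than one
child (i.e. `T` is a path), it is all of `V(T)`; otherwise it is the set of
vertices of depth at most the depth of the minimum-depth vertex having more than
one child. -/
def topSep (T : RootedForest V) [Fintype V] : Finset V :=
  if _ : ∃ p, 2 ≤ T.childCount p then
    Finset.univ.filter
      (fun v => T.depth v ≤ sInf {d | ∃ p, 2 ≤ T.childCount p ∧ T.depth p = d})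
  else Finset.univ

end RootedForest

/-- `T` is a treedepth decomposition of `G`: a rooted forest on the vertex set of
`G` such that the endpoints of every edge of `G` are in ancestor-descendant
relation. -/
def IsTDDecomp {V : Type} (G : SimpleGraph V) (T : RootedForest V) : Prop :=
  ∀ u v, G.Adj u v → T.Ancestor u v ∨ T.Ancestor v u

/-- The treedepth of a finite graph: the minimum height of a treedepth
decomposition of `G`. -/
def treedepth {V : Type} [Fintype V] (G : SimpleGraph V) : ℕ :=
  sInf {h | ∃ T : RootedForest V, IsTDDecomp G T ∧ T.height = h}

/-- `(T, f)` is a tree decomposition of `G`. -/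
def IsTreeDecomp {V ι : Type} (G : SimpleGraph V) (T : SimpleGraph ι)
    (f : ι → Finset V) : Prop :=
  T.IsTree ∧
  (∀ v, ∃ i, v ∈ f i) ∧
  (∀ u v, G.Adj u v → ∃ i, u ∈ f i ∧ v ∈ f i) ∧
  (∀ v, (T.induce {i | v ∈ f i}).Connected)

/-- The treewidth of a finite graph: the minimum over all tree decompositions of
(maximum bag size minus one), phrased as the least `w` such that `G` has a tree
decomposition all of whose bags have at most `w + 1` vertices. -/
def treewidth {V : Type} [Fintype V] (G : SimpleGraph V) : ℕ :=
  sInf {w | ∃ (ι : Type) (_ : Fintype ι) (T : SimpleGraph ι) (f : ι → Finset V),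
    IsTreeDecomp G T f ∧ ∀ i, (f i).card ≤ w + 1}

/-- `S` is an `a`-`b` separator of `G`: `a, b ∉ S` and every walk from `a` to `b`
meets `S` (i.e. `a` and `b` lie in different connected components of `G ∖ S`). -/
def IsABSep {V : Type} (G : SimpleGraph V) (a b : V) (S : Finset V) : Prop :=
  a ∉ S ∧ b ∉ S ∧ ∀ w : G.Walk a b, ∃ x ∈ w.support, x ∈ S

/-- `S` is a minimal separator of `G`: for some vertices `a, b`, it is an
`a`-`b` separator no proper subset of which is an `a`-`b` separator. -/
def IsMinSep {V : Type} (G : SimpleGraph V) (S : Finset V) : Prop :=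
  ∃ a b, IsABSep G a b S ∧ ∀ S' ⊂ S, ¬ IsABSep G a b S'

/-- The grid graph `P_m × P_n`, with vertex set
`{(i,j) : 1 ≤ i ≤ n, 1 ≤ j ≤ m}` and edges between vertices at ℓ1-distance 1. -/
def gridGraph (n m : ℕ) : SimpleGraph (Fin n × Fin m) where
  Adj a b := Nat.dist a.1.val b.1.val + Nat.dist a.2.val b.2.val = 1
  symm := by
    constructor
    intro a b h
    try dsimp only at h ⊢
    rwa [Nat.dist_comm b.1.val, Nat.dist_comm b.2.val]
  loopless := by constructor; intro a h; simp [Nat.dist_self] at h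


/-- Vertices of the broom: grid vertices plus, for each row `i`, a path on `2^k - 1` vertices. -/
abbrev BroomV (n m k : ℕ) : Type := (Fin n × Fin m) ⊕ (Fin n × Fin (2 ^ k - 1))

/-- The broom `B_{n,m,k}`. -/
def broom (n m k : ℕ) : SimpleGraph (BroomV n m k) :=
  SimpleGraph.fromRel (fun x y =>
    match x, y with
    | .inl a, .inl b => (gridGraph n m).Adj a b
    | .inl a, .inr b => a.1 = b.1 ∧ a.2.val = m - 1 ∧ b.2.val = 0
    | .inr a, .inr b => a.1 = b.1 ∧ a.2.val + 1 = b.2.val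
    | .inr _, .inl _ => False)

/-- Vertices of the double broom: grid vertices plus, for each row `i`, a path
attached at `(i,1)` (first summand) and a path attached at `(i,m)` (second summand). -/
abbrev DBroomV (n m k : ℕ) : Type :=
  (Fin n × Fin m) ⊕ (Fin n × Fin (2 ^ k - 1)) ⊕ (Fin n × Fin (2 ^ k - 1))

/-- The double broom `D_{n,m,k}`. -/
def dbroom (n m k : ℕ) : SimpleGraph (DBroomV n m k) :=
  SimpleGraph.fromRel (fun x y =>
    match x, y with
    | .inl a, .inl b => (gridGraph n m).Adj a b
    | .inl a, .inr (.inl b) => a.1 = b.1 ∧ a.2.val = 0 ∧ b.2.val = 0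
    | .inl a, .inr (.inr b) => a.1 = b.1 ∧ a.2.val = m - 1 ∧ b.2.val = 0
    | .inr (.inl a), .inr (.inl b) => a.1 = b.1 ∧ a.2.val + 1 = b.2.val
    | .inr (.inr a), .inr (.inr b) => a.1 = b.1 ∧ a.2.val + 1 = b.2.val
    | _, _ => False)

/-- Vertices of the graph `G_{n,m,k,l}`: grid vertices, plus a path on `2^k - 1`
vertices for every triple (row `i`, end `e ∈ {1,m}`, vertex `w ∈ W`), plus the
set `W` of `l` new vertices. -/
abbrev CornerV (n m k l : ℕ) : Type :=
  (Fin n × Fin m) ⊕ ((Fin n × Fin 2 × Fin l) × Fin (2 ^ k - 1)) ⊕ Fin l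

/-- The graph `G_{n,m,k,l}`. -/
def corner (n m k l : ℕ) : SimpleGraph (CornerV n m k l) :=
  SimpleGraph.fromRel (fun x y =>
    match x, y with
    | .inl a, .inl b => (gridGraph n m).Adj a b
    | .inl a, .inr (.inl (⟨i, e, _⟩, t)) =>
        a.1 = i ∧ t.val = 0 ∧
          ((e.val = 0 ∧ a.2.val = 0) ∨ (e.val = 1 ∧ a.2.val = m - 1))
    | .inr (.inl (p, t)), .inr (.inl (q, s)) => p = q ∧ t.val + 1 = s.val
    | .inr (.inl (⟨_, _, w⟩, t)), .inr (.inr w') => w = w' ∧ t.val = 2 ^ k - 2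
    | _, _ => False)

/-- `H` is a minor of `G`: there are pairwise disjoint connected branch sets in
`G`, one for each vertex of `H`, such that adjacent vertices of `H` have
adjacent branch sets. -/
def IsMinor {W V : Type} (H : SimpleGraph W) (G : SimpleGraph V) : Prop :=
  ∃ B : W → Set V,
    (∀ w, (G.induce (B w)).Connected) ∧
    (∀ w w', w ≠ w' → Disjoint (B w) (B w')) ∧
    (∀ w w', H.Adj w w' → ∃ u ∈ B w, ∃ v ∈ B w', G.Adj u v)

/-- A graph is chordal if it has no induced cycle of length four or more. -/
def IsChordal {V : Type} (G : SimpleGraph V) : Prop :=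
  ∀ c : ℕ, 4 ≤ c → IsEmpty (SimpleGraph.cycleGraph c ↪g G)

/-- A graph is a cograph if it has no induced path on four vertices. -/
def IsCograph {V : Type} (G : SimpleGraph V) : Prop :=
  IsEmpty (SimpleGraph.pathGraph 4 ↪g G)

/-- A graph is outerplanar iff it contains neither `K₄` nor `K_{2,3}` as a minor. -/
def IsOuterplanar {V : Type} (G : SimpleGraph V) : Prop :=
  ¬ IsMinor (⊤ : SimpleGraph (Fin 4)) G ∧
  ¬ IsMinor (completeBipartiteGraph (Fin 2) (Fin 3)) G

/-- The graph obtained from `G'` and the path on `p` vertices by adding a single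
edge between `u ∈ V(G')` and a path vertex `v`. -/
def attachPath {V' : Type} (G' : SimpleGraph V') (p : ℕ) (u : V') (v : Fin p) :
    SimpleGraph (V' ⊕ Fin p) :=
  SimpleGraph.fromRel (fun x y =>
    match x, y with
    | .inl a, .inl b => G'.Adj a b
    | .inr a, .inr b => a.val + 1 = b.val
    | .inl a, .inr b => a = u ∧ b = v
    | .inr _, .inl _ => False)



namespace RootedForest

variable {V : Type} (T : RootedForest V)

lemma one_le_depth (v : V) : 1 ≤ T.depth v := by
  cases h : T.parent v with
  | none => rw [T.depth_root v h]
  | some u => rw [T.depth_parent v u h]; omega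

lemma anc_refl (v : V) : T.Ancestor v v := Relation.ReflTransGen.refl

lemma anc_trans {u v w : V} (h1 : T.Ancestor u v) (h2 : T.Ancestor v w) :
    T.Ancestor u w := Relation.ReflTransGen.trans h2 h1

lemma anc_depth_le {u v : V} (h : T.Ancestor u v) : T.depth u ≤ T.depth v := by
  induction h with
  | refl => exact le_refl _
  | tail _ hstep ih =>
      rename_i b c _
      have := T.depth_parent b c hstep
      omega

lemma anc_total {u w v : V} (h1 : T.Ancestor u v) (h2 : T.Ancestor w v) :
    T.Ancestor w u ∨ T.Ancestor u w := by
  exact Relation.ReflTransGen.total_of_right_unique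
    (fun a b c hb hc => by rw [hb] at hc; exact Option.some.inj hc) h1 h2

end RootedForest

namespace RootedForest

variable {V : Type} (T : RootedForest V)

lemma anc_cases {u v : V} (h : T.Ancestor u v) :
    u = v ∨ ∃ w, T.parent v = some w ∧ T.Ancestor u w := by
  rcases Relation.ReflTransGen.cases_head h with h | ⟨w, hw, h⟩
  · exact Or.inl h.symm
  · exact Or.inr ⟨w, hw, h⟩

lemma anc_depth_lt {u v : V} (h : T.Ancestor u v) (hne : u ≠ v) :
    T.depth u < T.depth v := by
  rcases T.anc_cases h with h | ⟨w, hw, h⟩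
  · exact absurd h hne
  · have := T.depth_parent v w hw
    have := T.anc_depth_le h
    omega

lemma anc_antisymm {u v : V} (h1 : T.Ancestor u v) (h2 : T.Ancestor v u) : u = v := by
  by_contra hne
  have := T.anc_depth_lt h1 hne
  have := T.anc_depth_lt h2 (Ne.symm hne)
  omega

lemma anc_unique_depth {u u' v : V} (h1 : T.Ancestor u v) (h2 : T.Ancestor u' v)
    (hd : T.depth u = T.depth u') : u = u' := by
  rcases T.anc_total h1 h2 with h | h
  · by_contra hne; have := T.anc_depth_lt h (Ne.symm hne); omega
  · by_contra hne; have := T.anc_depth_lt h hne; omega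

lemma parent_some_of_one_lt_depth {v : V} (h : 1 < T.depth v) :
    ∃ u, T.parent v = some u := by
  cases hp : T.parent v with
  | none => have := T.depth_root v hp; omega
  | some u => exact ⟨u, rfl⟩

lemma exists_anc_at_depth : ∀ (v : V) (j : ℕ), 1 ≤ j → j ≤ T.depth v →
    ∃ u, T.Ancestor u v ∧ T.depth u = j := by
  suffices H : ∀ (k : ℕ) (v : V), T.depth v = k → ∀ (j : ℕ), 1 ≤ j → j ≤ T.depth v →
      ∃ u, T.Ancestor u v ∧ T.depth u = j by
    exact fun v => H (T.depth v) v rfl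
  intro k
  induction k using Nat.strong_induction_on with
  | _ k ih =>
    intro v hd j hj1 hj2
    rcases eq_or_lt_of_le hj2 with heq | hlt
    · exact ⟨v, T.anc_refl v, hd ▸ heq.symm⟩
    · have h1 : 1 < T.depth v := by omega
      obtain ⟨w, hw⟩ := T.parent_some_of_one_lt_depth h1
      have hdw := T.depth_parent v w hw
      obtain ⟨u, hu1, hu2⟩ := ih (T.depth w) (by omega) w rfl j hj1 (by omega)
      exact ⟨u, T.anc_trans hu1 (Relation.ReflTransGen.single hw), hu2⟩

lemma exists_root_anc : ∀ v : V, ∃ r, T.Ancestor r v ∧ T.parent r = none := by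
  suffices H : ∀ (k : ℕ) (v : V), T.depth v = k → ∃ r, T.Ancestor r v ∧ T.parent r = none by
    exact fun v => H (T.depth v) v rfl
  intro k
  induction k using Nat.strong_induction_on with
  | _ k ih =>
    intro v hd
    cases hp : T.parent v with
    | none => exact ⟨v, T.anc_refl v, hp⟩
    | some u =>
      have hdu := T.depth_parent v u hp
      obtain ⟨r, hr1, hr2⟩ := ih (T.depth u) (by omega) u rfl
      exact ⟨r, T.anc_trans hr1 (Relation.ReflTransGen.single hp), hr2⟩

lemma root_eq_of_anc {r r' v : V} (h1 : T.Ancestor r v) (hr : T.parent r = none)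
    (h2 : T.Ancestor r' v) (hr' : T.parent r' = none) : r = r' := by
  rcases T.anc_total h1 h2 with h | h
  · rcases T.anc_cases h with h | ⟨w, hw, _⟩
    · exact h.symm
    · rw [hr] at hw; exact absurd hw (by simp)
  · rcases T.anc_cases h with h | ⟨w, hw, _⟩
    · exact h
    · rw [hr'] at hw; exact absurd hw (by simp)

lemma depth_one_root {v : V} (h : T.depth v = 1) : T.parent v = none := by
  cases hp : T.parent v with
  | none => rfl
  | some u =>
    have := T.depth_parent v u hp
    have := T.one_le_depth u
    omega

end RootedForest

namespace RootedForest

variable {V : Type} [Fintype V] (T : RootedForest V)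

/-- If all vertices strictly above `u` have at most one child and roots are unique,
then `u` is the unique vertex at its depth. -/
lemma unique_at_depth
    (hroot : ∀ r r', T.parent r = none → T.parent r' = none → r = r') :
    ∀ (k : ℕ) (u v : V), T.depth u = k → T.depth v = k →
      (∀ w, T.depth w < k → T.childCount w ≤ 1) → u = v := by
  intro k
  induction k using Nat.strong_induction_on with
  | _ k ih =>
    intro u v hu hv hcc
    rcases Nat.lt_or_ge 1 k with hk | hk
    · obtain ⟨u', hu'⟩ := T.parent_some_of_one_lt_depth (by omega : 1 < T.depth u)
      obtain ⟨v', hv'⟩ := T.parent_some_of_one_lt_depth (by omega : 1 < T.depth v)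
      have hdu' := T.depth_parent u u' hu'
      have hdv' := T.depth_parent v v' hv'
      have heq : u' = v' := by
        refine ih (k-1) (by omega) u' v' (by omega) (by omega) ?_
        intro w hw; exact hcc w (by omega)
      by_contra hne
      have h2 : 2 ≤ T.childCount u' := by
        have : 1 < (Finset.univ.filter (fun x => T.parent x = some u')).card :=
          Finset.one_lt_card.mpr ⟨u, by simp [hu'], v, by simp [heq ▸ hv'], hne⟩
        unfold RootedForest.childCount; omega
      have := hcc u' (by omega : T.depth u' < k)
      omega
    · have h1 : T.depth u = 1 := by have := T.one_le_depth u; omega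
      have h2 : T.depth v = 1 := by have := T.one_le_depth v; omega
      exact hroot u v (T.depth_one_root h1) (T.depth_one_root h2)

end RootedForest

/-- In a treedepth decomposition of a connected graph, roots are unique. -/
lemma root_unique_of_connected {V : Type} {G : SimpleGraph V} {T : RootedForest V}
    (hconn : G.Connected) (hdec : IsTDDecomp G T) :
    ∀ r r', T.parent r = none → T.parent r' = none → r = r' := by
  have key : ∀ (u v : V) (w : G.Walk u v) (r r' : V), T.Ancestor r u → T.parent r = none →
      T.Ancestor r' v → T.parent r' = none → r = r' := by
    intro u v w
    induction w with
    | nil => intro r r' h1 hr h2 hr'; exact T.root_eq_of_anc h1 hr h2 hr'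
    | @cons a b c h p ih =>
      intro r r' h1 hr h2 hr'
      obtain ⟨rb, hrb1, hrb2⟩ := T.exists_root_anc b
      have hab : r = rb := by
        rcases hdec _ _ h with hanc | hanc
        · exact T.root_eq_of_anc (T.anc_trans h1 hanc) hr hrb1 hrb2
        · exact T.root_eq_of_anc h1 hr (T.anc_trans hrb1 hanc) hrb2
      exact hab.trans (ih rb r' hrb1 hrb2 h2 hr')
  intro r r' hr hr'
  exact key r r' (hconn.preconnected r r').some r r' (T.anc_refl r) hr (T.anc_refl r') hr'

/-- Shrink a separator to a minimal one. -/
lemma exists_minimal_sep {V : Type} (G : SimpleGraph V) (a b : V) :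
    ∀ (S : Finset V), IsABSep G a b S →
      ∃ S', S' ⊆ S ∧ IsABSep G a b S' ∧ ∀ S'' ⊂ S', ¬ IsABSep G a b S'' := by
  suffices H : ∀ (n : ℕ) (S : Finset V), S.card = n → IsABSep G a b S →
      ∃ S', S' ⊆ S ∧ IsABSep G a b S' ∧ ∀ S'' ⊂ S', ¬ IsABSep G a b S'' by
    exact fun S => H S.card S rfl
  intro n
  induction n using Nat.strong_induction_on with
  | _ n ih =>
    intro S hn hS
    by_cases h : ∃ S'' ⊂ S, IsABSep G a b S''
    · obtain ⟨S'', hsub, hS''⟩ := h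
      obtain ⟨S', h1, h2, h3⟩ := ih S''.card (hn ▸ Finset.card_lt_card hsub) S'' rfl hS''
      exact ⟨S', h1.trans hsub.subset, h2, h3⟩
    · push_neg at h
      exact ⟨S, Finset.Subset.refl S, hS, fun S'' hsub => h S'' hsub⟩

/-- A decomposition witnessing treedepth ≤ n - 1 for non-complete graphs. -/
lemma exists_small_decomp {V : Type} [Fintype V] (G : SimpleGraph V) (x y : V)
    (hxy : x ≠ y) (hna : ¬ G.Adj x y) :
    ∃ T : RootedForest V, IsTDDecomp G T ∧ T.height ≤ Fintype.card V - 1 := by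
  classical
  set m := Fintype.card {v : V // v ≠ x ∧ v ≠ y} with hm
  have hcard : m + 2 = Fintype.card V := by
    rw [hm, Fintype.card_subtype]
    have hfil : Finset.univ.filter (fun v : V => v ≠ x ∧ v ≠ y) = ({x, y} : Finset V)ᶜ := by
      ext v; simp [not_or]
    rw [hfil, Finset.card_compl, Finset.card_pair hxy]
    have : 2 ≤ Fintype.card V := by
      have := Fintype.card_le_of_injective (fun b : Bool => if b then x else y)
        (by intro a b hab; cases a <;> cases b <;> simp_all [hxy, hxy.symm])
      simpa using this
    omega
  set σ := Fintype.equivFin {v : V // v ≠ x ∧ v ≠ y} with hσ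
  set rank : V → ℕ := fun v => if h : v ≠ x ∧ v ≠ y then (σ ⟨v, h⟩ : ℕ) else m with hrank
  have hrank_le : ∀ v, rank v ≤ m := by
    intro v
    simp only [hrank]
    split
    · exact le_of_lt (Fin.is_lt _)
    · exact le_refl m
  have hrank_lt : ∀ (v : V) (h : v ≠ x ∧ v ≠ y), rank v < m := by
    intro v h
    simp only [hrank, dif_pos h]
    exact Fin.is_lt _
  have hrank_symm : ∀ i : Fin m, rank ((σ.symm i : {v : V // v ≠ x ∧ v ≠ y}) : V) = i := by
    intro i
    simp only [hrank, dif_pos (σ.symm i).2]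
    simp
  set pa : V → Option V := fun v =>
    if h0 : rank v = 0 then none
    else some ((σ.symm ⟨rank v - 1, by have := hrank_le v; omega⟩ :
      {v : V // v ≠ x ∧ v ≠ y}) : V) with hpa
  refine ⟨⟨pa, fun v => rank v + 1, ?_, ?_⟩, ?_, ?_⟩
  · intro v hv
    simp only [hpa] at hv
    split at hv
    · rename_i h0
      show rank v + 1 = 1
      omega
    · exact absurd hv (by simp)
  · intro v u hv
    simp only [hpa] at hv
    split at hv
    · exact absurd hv (by simp)
    · rename_i h0
      have hu : u = ((σ.symm ⟨rank v - 1, by have := hrank_le v; omega⟩ :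
          {v : V // v ≠ x ∧ v ≠ y}) : V) := by
        exact (Option.some.inj hv).symm
      show rank v + 1 = rank u + 1 + 1
      rw [hu, hrank_symm]
      simp only [Fin.val_mk]
      omega
  · -- IsTDDecomp
    have hchain : ∀ (k : ℕ) (u v : V), u ≠ x → u ≠ y → rank v = rank u + k →
        Relation.ReflTransGen (fun a b => pa a = some b) v u := by
      intro k
      induction k with
      | zero =>
        intro u v hux huy hr
        have hvU : v ≠ x ∧ v ≠ y := by
          by_contra hc
          have : rank v = m := by simp only [hrank]; rw [dif_neg hc]
          have := hrank_lt u ⟨hux, huy⟩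
          omega
        have : v = u := by
          have h1 : (σ ⟨v, hvU⟩ : ℕ) = (σ ⟨u, hux, huy⟩ : ℕ) := by
            have hv' : rank v = (σ ⟨v, hvU⟩ : ℕ) := by simp only [hrank, dif_pos hvU]
            have hu' : rank u = (σ ⟨u, hux, huy⟩ : ℕ) := by
              simp only [hrank, dif_pos (⟨hux, huy⟩ : u ≠ x ∧ u ≠ y)]
            omega
          have h2 : (⟨v, hvU⟩ : {v : V // v ≠ x ∧ v ≠ y}) = ⟨u, hux, huy⟩ :=
            σ.injective (Fin.ext h1)
          exact congrArg Subtype.val h2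
        rw [this]
      | succ k ihk =>
        intro u v hux huy hr
        have h0 : rank v ≠ 0 := by
          have := hrank_le u; omega
        have hpav : pa v = some ((σ.symm ⟨rank v - 1, by have := hrank_le v; omega⟩ :
            {v : V // v ≠ x ∧ v ≠ y}) : V) := by
          simp only [hpa]; rw [dif_neg h0]
        refine Relation.ReflTransGen.head hpav ?_
        refine ihk u _ hux huy ?_
        rw [hrank_symm]
        simp only [Fin.val_mk]
        omega
    intro a b hadj
    have hne := hadj.ne
    by_cases ha : a ≠ x ∧ a ≠ y
    · by_cases hb : b ≠ x ∧ b ≠ y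
      · rcases le_total (rank a) (rank b) with hle | hle
        · exact Or.inl (hchain (rank b - rank a) a b ha.1 ha.2 (by omega))
        · exact Or.inr (hchain (rank a - rank b) b a hb.1 hb.2 (by omega))
      · refine Or.inl (hchain (rank b - rank a) a b ha.1 ha.2 ?_)
        have h1 : rank b = m := by simp only [hrank]; rw [dif_neg hb]
        have := hrank_lt a ha
        omega
    · by_cases hb : b ≠ x ∧ b ≠ y
      · refine Or.inr (hchain (rank a - rank b) b a hb.1 hb.2 ?_)
        have h1 : rank a = m := by simp only [hrank]; rw [dif_neg ha]
        have := hrank_lt b hb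
        omega
      · exfalso
        push_neg at ha hb
        by_cases hax : a = x
        · have : b = y := by
            rcases Classical.em (b = x) with h | h
            · exact absurd (hax ▸ h ▸ rfl : a = b) hne
            · exact hb h
          exact hna (hax ▸ this ▸ hadj)
        · have ha' : a = y := ha hax
          have hb' : b = x := by
            rcases Classical.em (b = x) with h | h
            · exact h
            · exact absurd (ha' ▸ (hb h) ▸ rfl : a = b) hne
          exact hna (G.adj_symm (ha' ▸ hb' ▸ hadj))
  · -- height bound
    rw [RootedForest.height]
    refine Finset.sup_le ?_
    intro v _
    have := hrank_le v
    simp only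
    omega


/-- For a connected finite simple graph `G` that is not complete,
there exists an optimal treedepth decomposition `T` of `G` (a rooted tree of
height `td(G)`) whose top separator `ts(T)` is a minimal separator of `G`. -/
theorem statement5 {V : Type} [Fintype V] (G : SimpleGraph V)
    (hconn : G.Connected) (hG : G ≠ ⊤) :
    ∃ T : RootedForest V, IsTDDecomp G T ∧ T.IsTree ∧ T.height = treedepth G ∧
      IsMinSep G T.topSep := by
  classical
  have hV : Nonempty V := hconn.nonempty
  obtain ⟨x, y, hxy, hna⟩ : ∃ x y : V, x ≠ y ∧ ¬ G.Adj x y := by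
    by_contra h
    push_neg at h
    apply hG
    ext u v
    simp only [SimpleGraph.top_adj]
    exact ⟨fun h' => h'.ne, fun hne => h u v hne⟩
  obtain ⟨Ts, hTs, hTsh⟩ := exists_small_decomp G x y hxy hna
  set t := treedepth G with ht
  have htmem : ∃ T : RootedForest V, IsTDDecomp G T ∧ T.height = t := by
    have h1 : {h | ∃ T : RootedForest V, IsTDDecomp G T ∧ T.height = h}.Nonempty :=
      ⟨Ts.height, Ts, hTs, rfl⟩
    have h2 := Nat.sInf_mem h1
    rw [ht, treedepth]
    exact h2
  obtain ⟨T₀, hT₀, hT₀h⟩ := htmem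
  have htle : t ≤ Fintype.card V - 1 := by
    rw [ht, treedepth]
    exact le_trans (Nat.sInf_le ⟨Ts, hTs, rfl⟩) hTsh
  have hroot := root_unique_of_connected hconn hT₀
  have hdepth_le_height : ∀ v, T₀.depth v ≤ t := by
    intro v
    rw [← hT₀h, RootedForest.height]
    exact Finset.le_sup (Finset.mem_univ v)
  have hB : (Finset.univ.filter (fun v => 2 ≤ T₀.childCount v)).Nonempty := by
    rw [Finset.filter_nonempty_iff]
    by_contra hB
    push_neg at hB
    have hcc : ∀ w, T₀.childCount w ≤ 1 := by
      intro w
      have := hB w (Finset.mem_univ w)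
      omega
    have hinj : Function.Injective T₀.depth := by
      intro u v h
      exact T₀.unique_at_depth hroot (T₀.depth v) u v h rfl (fun w _ => hcc w)
    have hle : Fintype.card V ≤ T₀.height := by
      have h1 : (Finset.univ.image T₀.depth).card = Fintype.card V := by
        rw [Finset.card_image_of_injective _ hinj, Finset.card_univ]
      have h2 : Finset.univ.image T₀.depth ⊆ Finset.Icc 1 T₀.height := by
        intro k hk
        obtain ⟨v, _, hv⟩ := Finset.mem_image.mp hk
        rw [Finset.mem_Icc]
        exact ⟨hv ▸ T₀.one_le_depth v, hv ▸ Finset.le_sup (Finset.mem_univ v)⟩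
      have h3 := Finset.card_le_card h2
      rw [h1, Nat.card_Icc] at h3
      omega
    have hpos : 0 < Fintype.card V := Fintype.card_pos
    rw [hT₀h] at hle
    omega
  obtain ⟨p, hpmem, hpmin⟩ := Finset.exists_min_image _ T₀.depth hB
  set d := T₀.depth p with hd
  have hp2 : 2 ≤ T₀.childCount p := (Finset.mem_filter.mp hpmem).2
  have hmind : ∀ v, 2 ≤ T₀.childCount v → d ≤ T₀.depth v := fun v hv =>
    hpmin v (Finset.mem_filter.mpr ⟨Finset.mem_univ v, hv⟩)
  have huniq : ∀ u v, T₀.depth u ≤ d → T₀.depth u = T₀.depth v → u = v := by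
    intro u v h1 h2
    refine T₀.unique_at_depth hroot (T₀.depth u) u v rfl h2.symm ?_
    intro w hw
    by_contra hc
    push_neg at hc
    have := hmind w (by omega)
    omega
  obtain ⟨c1, hc1, c2, hc2, hcc12⟩ := Finset.one_lt_card.mp
    (lt_of_lt_of_le one_lt_two hp2 : 1 < (Finset.univ.filter
      (fun v => T₀.parent v = some p)).card)
  have hc1p : T₀.parent c1 = some p := (Finset.mem_filter.mp hc1).2
  have hc2p : T₀.parent c2 = some p := (Finset.mem_filter.mp hc2).2
  have hdc1 : T₀.depth c1 = d + 1 := by rw [T₀.depth_parent c1 p hc1p]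
  have hdc2 : T₀.depth c2 = d + 1 := by rw [T₀.depth_parent c2 p hc2p]
  set S : Finset V := Finset.univ.filter (fun v => T₀.depth v ≤ d) with hS
  -- every walk avoiding S connects vertices with the same ancestor at depth d+1
  have hwalk : ∀ (u v : V) (w : G.Walk u v), (∀ z ∈ w.support, d < T₀.depth z) →
      ∀ u1 u2, T₀.Ancestor u1 u → T₀.depth u1 = d + 1 →
        T₀.Ancestor u2 v → T₀.depth u2 = d + 1 → u1 = u2 := by
    intro u v w
    induction w with
    | nil =>
      intro _ u1 u2 h1 hd1 h2 hd2
      exact T₀.anc_unique_depth h1 h2 (by omega)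
    | @cons a b c hadj pw ih =>
      intro hsup u1 u2 h1 hd1 h2 hd2
      have hb : d < T₀.depth b := by
        refine hsup b ?_
        simp [SimpleGraph.Walk.support_cons]
      obtain ⟨ub, hub1, hub2⟩ := T₀.exists_anc_at_depth b (d+1) (by omega) (by omega)
      have hstep : u1 = ub := by
        rcases hT₀ _ _ hadj with hanc | hanc
        · exact T₀.anc_unique_depth (T₀.anc_trans h1 hanc) hub1 (by omega)
        · have ha : d < T₀.depth a := by
            refine hsup a ?_
            simp [SimpleGraph.Walk.support_cons]
          exact T₀.anc_unique_depth h1 (T₀.anc_trans hub1 hanc) (by omega)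
      refine hstep.trans (ih ?_ ub u2 hub1 hub2 h2 hd2)
      intro z hz
      exact hsup z (by simp [SimpleGraph.Walk.support_cons, hz])
  have hsepS : IsABSep G c1 c2 S := by
    refine ⟨?_, ?_, ?_⟩
    · simp only [hS, Finset.mem_filter]
      push_neg
      intro _
      omega
    · simp only [hS, Finset.mem_filter]
      push_neg
      intro _
      omega
    · intro w
      by_contra hc
      push_neg at hc
      have hsup : ∀ z ∈ w.support, d < T₀.depth z := by
        intro z hz
        have := hc z hz
        simp only [hS, Finset.mem_filter] at this
        push_neg at this
        exact this (Finset.mem_univ z)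
      exact hcc12 (hwalk c1 c2 w hsup c1 c2 (T₀.anc_refl c1) hdc1 (T₀.anc_refl c2) hdc2)
  obtain ⟨S', hS'sub, hS'sep, hS'min⟩ := exists_minimal_sep G c1 c2 S hsepS
  have hc1S' : c1 ∉ S' := hS'sep.1
  have hc2S' : c2 ∉ S' := hS'sep.2.1
  have hS'depth : ∀ s ∈ S', T₀.depth s ≤ d := by
    intro s hs
    have := hS'sub hs
    simp only [hS, Finset.mem_filter] at this
    exact this.2
  have hS'ne : S'.Nonempty := by
    obtain ⟨z, _, hz⟩ := hS'sep.2.2 (hconn.preconnected c1 c2).some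
    exact ⟨z, hz⟩
  set q := S'.card with hqdef
  have hq : 0 < q := Finset.card_pos.mpr hS'ne
  -- the graph G minus S'
  set H : SimpleGraph V := ⟨fun u v => G.Adj u v ∧ u ∉ S' ∧ v ∉ S',
    ⟨fun u v h => ⟨h.1.symm, h.2.2, h.2.1⟩⟩,
    ⟨fun v h => G.irrefl h.1⟩⟩ with hH
  have hreach_notin : ∀ u v : V, H.Reachable u v → v ∉ S' → u ∉ S' := by
    intro u v hr hv
    obtain ⟨w⟩ := hr
    cases w with
    | nil => exact hv
    | cons h p => exact h.2.1
  have hreach_walk : ∀ (u v : V) (w : H.Walk u v), u ∉ S' →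
      ∃ w' : G.Walk u v, ∀ z ∈ w'.support, z ∉ S' := by
    intro u v w
    induction w with
    | nil =>
      intro hu
      refine ⟨SimpleGraph.Walk.nil, ?_⟩
      intro z hz
      rw [SimpleGraph.Walk.support_nil, List.mem_singleton] at hz
      exact hz ▸ hu
    | @cons a b c h p ih =>
      intro hu
      obtain ⟨w', hw'⟩ := ih h.2.2
      refine ⟨SimpleGraph.Walk.cons h.1 w', ?_⟩
      intro z hz
      rw [SimpleGraph.Walk.support_cons, List.mem_cons] at hz
      rcases hz with hz | hz
      · exact hz ▸ h.2.1
      · exact hw' z hz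
  have hnotreach : ¬ H.Reachable c1 c2 := by
    intro hr
    obtain ⟨w, hw⟩ := hreach_walk c1 c2 hr.some hc1S'
    obtain ⟨z, hz1, hz2⟩ := hS'sep.2.2 w
    exact hw z hz1 hz2
  set σ : Fin q ≃ {z // z ∈ S'} := S'.equivFin.symm with hσ
  set idx : V → ℕ := fun v => if hv : v ∈ S' then (σ.symm ⟨v, hv⟩ : ℕ) else 0 with hidx
  have hidx_lt : ∀ v, idx v < q := by
    intro v
    simp only [hidx]
    split
    · exact Fin.is_lt _
    · exact hq
  have hidx_mem : ∀ (v : V) (hv : v ∈ S'), idx v = (σ.symm ⟨v, hv⟩ : ℕ) := by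
    intro v hv
    simp only [hidx, dif_pos hv]
  have hidxσ : ∀ i : Fin q, idx ((σ i : {z // z ∈ S'}) : V) = (i : ℕ) := by
    intro i
    rw [hidx_mem _ (σ i).2]
    simp
  have hidx_inj : ∀ u v, u ∈ S' → v ∈ S' → idx u = idx v → u = v := by
    intro u v hu hv h
    rw [hidx_mem u hu, hidx_mem v hv] at h
    have := σ.symm.injective (Fin.ext h)
    exact congrArg Subtype.val this
  set ancD : V → Finset V :=
    fun v => Finset.univ.filter (fun u => T₀.Ancestor u v ∧ H.Reachable u v) with hancD
  have hmemancD : ∀ v, v ∈ ancD v := by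
    intro v
    simp only [hancD, Finset.mem_filter]
    exact ⟨Finset.mem_univ v, T₀.anc_refl v, SimpleGraph.Reachable.refl v⟩
  have hancD_notS' : ∀ v u, v ∉ S' → u ∈ ancD v → u ∉ S' := by
    intro v u hv hu
    simp only [hancD, Finset.mem_filter] at hu
    exact hreach_notin u v hu.2.2 hv
  have hancD_anc : ∀ v u, u ∈ ancD v → T₀.Ancestor u v ∧ H.Reachable u v := by
    intro v u hu
    simp only [hancD, Finset.mem_filter] at hu
    exact hu.2
  have hancD_mem_iff : ∀ v u, u ∈ ancD v ↔ T₀.Ancestor u v ∧ H.Reachable u v := by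
    intro v u
    simp only [hancD, Finset.mem_filter, Finset.mem_univ, true_and]
  set pick : V → V := fun v =>
    if h : ((ancD v).erase v).Nonempty then
      (Finset.exists_max_image ((ancD v).erase v) T₀.depth h).choose
    else v with hpickdef
  have hpick : ∀ (v : V), ((ancD v).erase v).Nonempty →
      pick v ∈ (ancD v).erase v ∧
        ∀ b ∈ (ancD v).erase v, T₀.depth b ≤ T₀.depth (pick v) := by
    intro v h
    simp only [hpickdef, dif_pos h]
    obtain ⟨h1, h2⟩ := (Finset.exists_max_image ((ancD v).erase v) T₀.depth h).choose_spec
    exact ⟨h1, h2⟩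
  -- the key structural lemma about `pick`
  have hstruct : ∀ v, v ∉ S' → ∀ _ : ((ancD v).erase v).Nonempty,
      pick v ∉ S' ∧ ancD (pick v) = (ancD v).erase v := by
    intro v hv hne
    obtain ⟨hmem, hmax⟩ := hpick v hne
    set u := pick v
    have humem := Finset.mem_of_mem_erase hmem
    have hune : u ≠ v := Finset.ne_of_mem_erase hmem
    obtain ⟨hanc_uv, hreach_uv⟩ := hancD_anc v u humem
    have huS' : u ∉ S' := hancD_notS' v u hv humem
    have hdu : T₀.depth u < T₀.depth v := T₀.anc_depth_lt hanc_uv hune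
    constructor
    · exact huS'
    · apply Finset.Subset.antisymm
      · intro w hw
        obtain ⟨hanc_wu, hreach_wu⟩ := hancD_anc u w hw
        have h1 : T₀.Ancestor w v := T₀.anc_trans hanc_wu hanc_uv
        have h2 : H.Reachable w v := hreach_wu.trans hreach_uv
        have h3 : w ≠ v := by
          intro he
          have := T₀.anc_depth_le hanc_wu
          rw [he] at this
          omega
        exact Finset.mem_erase.mpr ⟨h3, (hancD_mem_iff v w).mpr ⟨h1, h2⟩⟩
      · intro w hw
        have hwv := Finset.ne_of_mem_erase hw
        obtain ⟨hanc_wv, hreach_wv⟩ := hancD_anc v w (Finset.mem_of_mem_erase hw)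
        have hdw : T₀.depth w ≤ T₀.depth u := hmax w hw
        rcases T₀.anc_total hanc_wv hanc_uv with h | h
        · -- u ancestor of w : forces u = w
          have : T₀.depth u ≤ T₀.depth w := T₀.anc_depth_le h
          have huw : u = w := T₀.anc_unique_depth hanc_uv hanc_wv (by omega)
          rw [← huw]
          exact hmemancD u
        · -- w ancestor of u
          have h2 : H.Reachable w u := hreach_wv.trans hreach_uv.symm
          exact (hancD_mem_iff u w).mpr ⟨h, h2⟩
  have hcard_pick : ∀ v, v ∉ S' → ∀ _ : ((ancD v).erase v).Nonempty,
      (ancD v).card = (ancD (pick v)).card + 1 := by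
    intro v hv hne
    rw [(hstruct v hv hne).2, Finset.card_erase_of_mem (hmemancD v)]
    have : 0 < (ancD v).card := Finset.card_pos.mpr ⟨v, hmemancD v⟩
    omega
  set paF : V → Option V := fun v =>
    if hv : v ∈ S' then
      (if idx v = 0 then none
        else some ((σ ⟨idx v - 1, lt_of_le_of_lt (Nat.sub_le _ _) (hidx_lt v)⟩ :
          {z // z ∈ S'}) : V))
    else if ((ancD v).erase v).Nonempty then some (pick v)
    else some ((σ ⟨q - 1, Nat.sub_lt hq Nat.one_pos⟩ : {z // z ∈ S'}) : V) with hpaF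
  set deF : V → ℕ := fun v => if v ∈ S' then idx v + 1 else q + (ancD v).card with hdeF
  have hdeF_mem : ∀ v, v ∈ S' → deF v = idx v + 1 := by
    intro v hv
    simp only [hdeF, if_pos hv]
  have hdeF_not : ∀ v, v ∉ S' → deF v = q + (ancD v).card := by
    intro v hv
    simp only [hdeF, if_neg hv]
  have hdeF_not_ge : ∀ v, v ∉ S' → q + 1 ≤ deF v := by
    intro v hv
    rw [hdeF_not v hv]
    have : 0 < (ancD v).card := Finset.card_pos.mpr ⟨v, hmemancD v⟩
    omega
  have hdr : ∀ v, paF v = none → deF v = 1 := by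
    intro v hv
    simp only [hpaF] at hv
    split at hv
    · rename_i hmem
      split at hv
      · rename_i h0
        rw [hdeF_mem v hmem, h0]
      · exact absurd hv (by simp)
    · split at hv <;> exact absurd hv (by simp)
  have hdp : ∀ v u, paF v = some u → deF v = deF u + 1 := by
    intro v u hv
    simp only [hpaF] at hv
    split at hv
    · rename_i hmem
      split at hv
      · exact absurd hv (by simp)
      · rename_i h0
        have hu := (Option.some.inj hv).symm
        have huS' : u ∈ S' := hu ▸ (σ _).2
        rw [hdeF_mem v hmem, hdeF_mem u huS', hu, hidxσ]
        simp only [Fin.val_mk]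
        omega
    · rename_i hmem
      split at hv
      · rename_i hne
        have hu := (Option.some.inj hv).symm
        rw [hdeF_not v hmem, hu, hdeF_not (pick v) (hstruct v hmem hne).1,
          hcard_pick v hmem hne]
        omega
      · rename_i hne
        have hu := (Option.some.inj hv).symm
        have huS' : u ∈ S' := hu ▸ (σ _).2
        rw [hdeF_not v hmem, hdeF_mem u huS', hu, hidxσ]
        simp only [Fin.val_mk]
        have hone : (ancD v).card = 1 := by
          have he : (ancD v).erase v = ∅ := Finset.not_nonempty_iff_eq_empty.mp hne
          have := Finset.insert_erase (hmemancD v)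
          rw [he] at this
          rw [← this]
          simp
        omega
  set F : RootedForest V := ⟨paF, deF, hdr, hdp⟩ with hF
  have hFd : F.depth = deF := rfl
  have hFp : F.parent = paF := rfl
  -- computation lemmas for paF
  have hpaF_root : ∀ (v : V), v ∈ S' → idx v = 0 → paF v = none := by
    intro v hv h0
    simp only [hpaF, dif_pos hv, if_pos h0]
  have hpaF_some : ∀ (v : V), v ∈ S' → ∀ i : Fin q, (i : ℕ) = idx v - 1 → idx v ≠ 0 →
      paF v = some ((σ i : {z // z ∈ S'}) : V) := by
    intro v hv i hi h0
    simp only [hpaF, dif_pos hv, if_neg h0]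
    congr 1
    have : (⟨idx v - 1, lt_of_le_of_lt (Nat.sub_le _ _) (hidx_lt v)⟩ : Fin q) = i :=
      Fin.ext (by rw [hi])
    rw [this]
  have hpaF_pick : ∀ (v : V), v ∉ S' → ((ancD v).erase v).Nonempty →
      paF v = some (pick v) := by
    intro v hv hne
    simp only [hpaF, dif_neg hv, if_pos hne]
  have hpaF_last : ∀ (v : V), v ∉ S' → ¬ ((ancD v).erase v).Nonempty →
      ∀ i : Fin q, (i : ℕ) = q - 1 → paF v = some ((σ i : {z // z ∈ S'}) : V) := by
    intro v hv hne i hi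
    simp only [hpaF, dif_neg hv, if_neg hne]
    congr 1
    have : (⟨q - 1, Nat.sub_lt hq Nat.one_pos⟩ : Fin q) = i := Fin.ext (by rw [hi])
    rw [this]
  -- ancestors within the top path
  have hLanc1 : ∀ (k : ℕ) (i j : Fin q), (i : ℕ) + k = (j : ℕ) →
      F.Ancestor ((σ i : {z // z ∈ S'}) : V) ((σ j : {z // z ∈ S'}) : V) := by
    intro k
    induction k with
    | zero =>
      intro i j hij
      have : i = j := Fin.ext (by omega)
      rw [this]
      exact F.anc_refl _
    | succ k ih =>
      intro i j hij
      have hjlt : (j : ℕ) - 1 < q := lt_of_le_of_lt (Nat.sub_le _ _) j.is_lt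
      set j' : Fin q := ⟨(j : ℕ) - 1, hjlt⟩ with hj'
      have hstep : paF ((σ j : {z // z ∈ S'}) : V) = some ((σ j' : {z // z ∈ S'}) : V) :=
        hpaF_some _ (σ j).2 j' (by rw [hidxσ]) (by rw [hidxσ]; omega)
      exact Relation.ReflTransGen.head hstep (ih i j' (by simp only [hj']; omega))
  have hLanc2 : ∀ (n : ℕ) (v : V), v ∉ S' → (ancD v).card = n →
      ∀ i : Fin q, F.Ancestor ((σ i : {z // z ∈ S'}) : V) v := by
    intro n
    induction n using Nat.strong_induction_on with
    | _ n ih =>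
      intro v hv hn i
      by_cases hne : ((ancD v).erase v).Nonempty
      · have hstep := hpaF_pick v hv hne
        have hcard := hcard_pick v hv hne
        refine Relation.ReflTransGen.head hstep ?_
        exact ih (ancD (pick v)).card (by omega) (pick v) (hstruct v hv hne).1 rfl i
      · have hstep := hpaF_last v hv hne ⟨q - 1, Nat.sub_lt hq Nat.one_pos⟩ rfl
        refine Relation.ReflTransGen.head hstep ?_
        exact hLanc1 ((q - 1) - (i : ℕ)) i ⟨q - 1, Nat.sub_lt hq Nat.one_pos⟩
          (by have := i.is_lt; simp only [Fin.val_mk]; omega)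
  have hLanc3 : ∀ (n : ℕ) (v : V), v ∉ S' → (ancD v).card = n →
      ∀ w ∈ (ancD v).erase v, F.Ancestor w v := by
    intro n
    induction n using Nat.strong_induction_on with
    | _ n ih =>
      intro v hv hn w hw
      have hne : ((ancD v).erase v).Nonempty := ⟨w, hw⟩
      have hstep := hpaF_pick v hv hne
      by_cases hwp : w = pick v
      · exact hwp ▸ Relation.ReflTransGen.single hstep
      · have hw2 : w ∈ (ancD (pick v)).erase (pick v) := by
          rw [Finset.mem_erase]
          refine ⟨hwp, ?_⟩
          rw [(hstruct v hv hne).2]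
          exact hw
        have hcard := hcard_pick v hv hne
        refine Relation.ReflTransGen.head hstep ?_
        exact ih (ancD (pick v)).card (by omega) (pick v) (hstruct v hv hne).1 rfl w hw2
  -- F is a treedepth decomposition of G
  have hdecF : IsTDDecomp G F := by
    intro a b hadj
    by_cases ha : a ∈ S'
    · by_cases hb : b ∈ S'
      · have hai : a = ((σ (σ.symm ⟨a, ha⟩) : {z // z ∈ S'}) : V) := by simp
        have hbi : b = ((σ (σ.symm ⟨b, hb⟩) : {z // z ∈ S'}) : V) := by simp
        rcases le_total ((σ.symm ⟨a, ha⟩ : Fin q) : ℕ) ((σ.symm ⟨b, hb⟩ : Fin q) : ℕ)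
          with hle | hle
        · refine Or.inl ?_
          rw [hai, hbi]
          exact hLanc1 _ _ _ (Nat.add_sub_cancel' hle)
        · refine Or.inr ?_
          rw [hai, hbi]
          exact hLanc1 _ _ _ (Nat.add_sub_cancel' hle)
      · refine Or.inl ?_
        have hai : a = ((σ (σ.symm ⟨a, ha⟩) : {z // z ∈ S'}) : V) := by simp
        rw [hai]
        exact hLanc2 (ancD b).card b hb rfl _
    · by_cases hb : b ∈ S'
      · refine Or.inr ?_
        have hbi : b = ((σ (σ.symm ⟨b, hb⟩) : {z // z ∈ S'}) : V) := by simp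
        rw [hbi]
        exact hLanc2 (ancD a).card a ha rfl _
      · have hHadj : H.Adj a b := ⟨hadj, ha, hb⟩
        rcases hT₀ a b hadj with hanc | hanc
        · refine Or.inl (hLanc3 (ancD b).card b hb rfl a ?_)
          exact Finset.mem_erase.mpr ⟨hadj.ne,
            (hancD_mem_iff b a).mpr ⟨hanc, hHadj.reachable⟩⟩
        · refine Or.inr (hLanc3 (ancD a).card a ha rfl b ?_)
          exact Finset.mem_erase.mpr ⟨hadj.ne.symm,
            (hancD_mem_iff a b).mpr ⟨hanc, hHadj.symm.reachable⟩⟩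
  -- F is a tree
  have hzero : (0 : ℕ) < q := hq
  have htreeF : F.IsTree := by
    refine ⟨((σ ⟨0, hzero⟩ : {z // z ∈ S'}) : V), ?_, ?_⟩
    · show paF _ = none
      exact hpaF_root _ (σ _).2 (by rw [hidxσ])
    · intro v hv
      have hv' : paF v = none := hv
      by_cases hmem : v ∈ S'
      · have h0 : idx v = 0 := by
          by_contra h0
          rw [hpaF_some v hmem ⟨idx v - 1, lt_of_le_of_lt (Nat.sub_le _ _) (hidx_lt v)⟩
            rfl h0] at hv'
          exact absurd hv' (by simp)
        have : σ.symm ⟨v, hmem⟩ = ⟨0, hzero⟩ := by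
          apply Fin.ext
          have := hidx_mem v hmem
          simp only [Fin.val_mk]
          omega
        have h2 : (⟨v, hmem⟩ : {z // z ∈ S'}) = σ ⟨0, hzero⟩ := by
          rw [← this]; simp
        exact congrArg Subtype.val h2
      · exfalso
        by_cases hne : ((ancD v).erase v).Nonempty
        · rw [hpaF_pick v hmem hne] at hv'
          exact absurd hv' (by simp)
        · rw [hpaF_last v hmem hne ⟨q - 1, Nat.sub_lt hq Nat.one_pos⟩ rfl] at hv'
          exact absurd hv' (by simp)
  -- counting : the height bound
  have hS'anc : ∀ s ∈ S', ∀ v : V, T₀.depth s ≤ T₀.depth v → T₀.Ancestor s v := by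
    intro s hs v hle
    obtain ⟨u, hu1, hu2⟩ := T₀.exists_anc_at_depth v (T₀.depth s) (T₀.one_le_depth s) hle
    have heq : u = s := huniq u s (hu2 ▸ hS'depth s hs) (by rw [hu2])
    exact heq ▸ hu1
  have hinjanc : ∀ v : V, Set.InjOn T₀.depth (ancD v : Set V) := by
    intro v u hu w hw hde
    exact T₀.anc_unique_depth (hancD_anc v u hu).1 (hancD_anc v w hw).1 hde
  have hinjS' : Set.InjOn T₀.depth (S' : Set V) := by
    intro u hu w hw hde
    exact huniq u w (hS'depth u hu) hde
  have hbound1 : ∀ v, v ∉ S' →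
      (ancD v).card + (S'.filter (fun s => T₀.depth s ≤ T₀.depth v)).card ≤ T₀.depth v := by
    intro v hv
    set k := T₀.depth v with hk
    set Sk := S'.filter (fun s => T₀.depth s ≤ k) with hSkdef
    have h2 : Sk.image T₀.depth ⊆ Finset.Icc 1 k := by
      intro z hz
      obtain ⟨s, hs, hsz⟩ := Finset.mem_image.mp hz
      rw [Finset.mem_Icc]
      have := (Finset.mem_filter.mp hs).2
      exact ⟨hsz ▸ T₀.one_le_depth s, hsz ▸ this⟩
    have h3 : (Sk.image T₀.depth).card = Sk.card := Finset.card_image_of_injOn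
      (Set.InjOn.mono (by intro z hz; exact (Finset.mem_filter.mp hz).1) hinjS')
    have h1 : (ancD v).card ≤ (Finset.Icc 1 k \ Sk.image T₀.depth).card := by
      refine Finset.card_le_card_of_injOn T₀.depth ?_ (hinjanc v)
      intro u hu
      rw [Finset.mem_coe, Finset.mem_sdiff]
      constructor
      · rw [Finset.mem_Icc]
        exact ⟨T₀.one_le_depth u, T₀.anc_depth_le (hancD_anc v u hu).1⟩
      · intro hc
        obtain ⟨s, hs, hsz⟩ := Finset.mem_image.mp hc
        have hsS' := (Finset.mem_filter.mp hs).1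
        have hsk := (Finset.mem_filter.mp hs).2
        have hsanc : T₀.Ancestor s v := hS'anc s hsS' v hsk
        have : u = s := T₀.anc_unique_depth (hancD_anc v u hu).1 hsanc hsz.symm
        exact (hancD_notS' v u hv hu) (this ▸ hsS')
    have h4 := Finset.card_le_card h2
    rw [h3, Nat.card_Icc] at h4
    rw [Finset.card_sdiff_of_subset h2, Nat.card_Icc, h3] at h1
    omega
  have hd1t : d + 1 ≤ t := hdc1 ▸ hdepth_le_height c1
  have hboundmain : ∀ v, v ∉ S' → q + (ancD v).card ≤ t := by
    intro v hv
    have hb1 := hbound1 v hv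
    set k := T₀.depth v with hk
    set Sk := S'.filter (fun s => T₀.depth s ≤ k) with hSkdef
    rcases le_or_gt k d with hkd | hkd
    · set Skc := S'.filter (fun s => ¬ T₀.depth s ≤ k) with hSkcdef
      have hsplit : Sk.card + Skc.card = q := Finset.card_filter_add_card_filter_not _
      have hbc : Skc.card ≤ d - k := by
        have himg : Skc.image T₀.depth ⊆ Finset.Icc (k + 1) d := by
          intro z hz
          obtain ⟨s, hs, hsz⟩ := Finset.mem_image.mp hz
          rw [Finset.mem_Icc]
          have h5 := (Finset.mem_filter.mp hs).2
          have h6 := hS'depth s (Finset.mem_filter.mp hs).1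
          omega
        have := Finset.card_le_card himg
        rw [Finset.card_image_of_injOn
          (Set.InjOn.mono (by intro z hz; exact (Finset.mem_filter.mp hz).1) hinjS'),
          Nat.card_Icc] at this
        omega
      omega
    · have hSkeq : Sk = S' := by
        rw [hSkdef]
        refine Finset.filter_true_of_mem ?_
        intro s hs
        have := hS'depth s hs
        omega
      have hkt : k ≤ t := hdepth_le_height v
      rw [hSkeq] at hb1
      omega
  have hqt : q ≤ t := by
    have := hboundmain c1 hc1S'
    have : 0 < (ancD c1).card := Finset.card_pos.mpr ⟨c1, hmemancD c1⟩
    have := hboundmain c1 hc1S'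
    omega
  have hheightF : F.height = t := by
    refine le_antisymm ?_ ?_
    · rw [RootedForest.height]
      refine Finset.sup_le ?_
      intro v _
      rw [hFd]
      by_cases hv : v ∈ S'
      · rw [hdeF_mem v hv]
        have := hidx_lt v
        omega
      · rw [hdeF_not v hv]
        exact hboundmain v hv
    · rw [ht, treedepth]
      exact Nat.sInf_le ⟨F, hdecF, rfl⟩
  -- roots of components
  have hroots : ∀ v, v ∉ S' → ∃ r, r ∉ S' ∧ H.Reachable r v ∧ (ancD r).erase r = ∅ := by
    intro v hv
    set Cv := Finset.univ.filter (fun u => u ∉ S' ∧ H.Reachable u v) with hCv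
    have hCvne : Cv.Nonempty := ⟨v, by
      simp only [hCv, Finset.mem_filter, Finset.mem_univ, true_and]
      exact ⟨hv, SimpleGraph.Reachable.refl v⟩⟩
    obtain ⟨r, hrmem, hrmin⟩ := Finset.exists_min_image Cv T₀.depth hCvne
    have hr1 := (Finset.mem_filter.mp hrmem).2
    refine ⟨r, hr1.1, hr1.2, ?_⟩
    rw [Finset.eq_empty_iff_forall_notMem]
    intro w hw
    have hwr := Finset.ne_of_mem_erase hw
    obtain ⟨hanc_wr, hreach_wr⟩ := hancD_anc r w (Finset.mem_of_mem_erase hw)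
    have hwS' : w ∉ S' := hreach_notin w r hreach_wr hr1.1
    have hwCv : w ∈ Cv := by
      simp only [hCv, Finset.mem_filter, Finset.mem_univ, true_and]
      exact ⟨hwS', hreach_wr.trans hr1.2⟩
    have h5 := hrmin w hwCv
    have h6 := T₀.anc_depth_lt hanc_wr hwr
    omega
  set jlast : Fin q := ⟨q - 1, Nat.sub_lt hq Nat.one_pos⟩ with hjlast
  obtain ⟨r1, hr1S', hr1reach, hr1e⟩ := hroots c1 hc1S'
  obtain ⟨r2, hr2S', hr2reach, hr2e⟩ := hroots c2 hc2S'
  have hr12 : r1 ≠ r2 := by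
    intro he
    exact hnotreach (hr1reach.symm.trans (he ▸ hr2reach))
  have hr1p : paF r1 = some ((σ jlast : {z // z ∈ S'}) : V) :=
    hpaF_last r1 hr1S' (by rw [hr1e]; exact Finset.not_nonempty_empty) jlast rfl
  have hr2p : paF r2 = some ((σ jlast : {z // z ∈ S'}) : V) :=
    hpaF_last r2 hr2S' (by rw [hr2e]; exact Finset.not_nonempty_empty) jlast rfl
  have hcc2F : 2 ≤ F.childCount ((σ jlast : {z // z ∈ S'}) : V) := by
    rw [RootedForest.childCount]
    refine Finset.one_lt_card.mpr ⟨r1, ?_, r2, ?_, hr12⟩ <;>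
      simp only [Finset.mem_filter, Finset.mem_univ, true_and]
    · exact hr1p
    · exact hr2p
  have hbr : ∃ p', 2 ≤ F.childCount p' := ⟨_, hcc2F⟩
  have hchild : ∀ (z : V) (i : Fin q), paF z = some ((σ i : {z // z ∈ S'}) : V) →
      (z ∈ S' ∧ idx z = (i : ℕ) + 1) ∨ (i : ℕ) = q - 1 := by
    intro z i hz
    simp only [hpaF] at hz
    split at hz
    · rename_i hmem
      split at hz
      · exact absurd hz (by simp)
      · rename_i h0
        have := Option.some.inj hz
        have h2 := σ.injective (Subtype.coe_injective this)
        have h3 : idx z - 1 = (i : ℕ) := by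
          have := congrArg Fin.val h2
          simpa using this
        exact Or.inl ⟨hmem, by omega⟩
    · rename_i hmem
      split at hz
      · rename_i hne
        have := Option.some.inj hz
        have : pick z ∈ S' := this ▸ (σ i).2
        exact absurd this (hstruct z hmem hne).1
      · have := Option.some.inj hz
        have h2 := σ.injective (Subtype.coe_injective this)
        have h3 : q - 1 = (i : ℕ) := by
          have := congrArg Fin.val h2
          simpa using this
        exact Or.inr h3.symm
  have hccsmall : ∀ i : Fin q, (i : ℕ) < q - 1 →
      F.childCount ((σ i : {z // z ∈ S'}) : V) ≤ 1 := by
    intro i hi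
    rw [RootedForest.childCount]
    refine Finset.card_le_one.mpr ?_
    intro a ha b hb
    simp only [Finset.mem_filter, Finset.mem_univ, true_and] at ha hb
    rcases hchild a i ha with ⟨haS', hai⟩ | hcon
    · rcases hchild b i hb with ⟨hbS', hbi⟩ | hcon
      · exact hidx_inj a b haS' hbS' (by omega)
      · omega
    · omega
  have hlb : ∀ p', 2 ≤ F.childCount p' → q ≤ F.depth p' := by
    intro p' hp'
    by_cases hmem : p' ∈ S'
    · have hrw : p' = ((σ (σ.symm ⟨p', hmem⟩) : {z // z ∈ S'}) : V) := by simp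
      have hiv : ¬ ((σ.symm ⟨p', hmem⟩ : Fin q) : ℕ) < q - 1 := by
        intro hlt
        have := hccsmall (σ.symm ⟨p', hmem⟩) hlt
        rw [← hrw] at this
        omega
      have hieq : ((σ.symm ⟨p', hmem⟩ : Fin q) : ℕ) = q - 1 := by
        have := (σ.symm ⟨p', hmem⟩ : Fin q).is_lt
        omega
      rw [hFd, hdeF_mem p' hmem, hidx_mem p' hmem]
      omega
    · rw [hFd]
      have := hdeF_not_ge p' hmem
      omega
  have hdeFlast : F.depth ((σ jlast : {z // z ∈ S'}) : V) = q := by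
    rw [hFd, hdeF_mem _ (σ jlast).2, hidxσ]
    simp only [hjlast, Fin.val_mk]
    omega
  have hsInf : sInf {d0 | ∃ p', 2 ≤ F.childCount p' ∧ F.depth p' = d0} = q := by
    have hmem : q ∈ {d0 | ∃ p', 2 ≤ F.childCount p' ∧ F.depth p' = d0} :=
      ⟨_, hcc2F, hdeFlast⟩
    refine le_antisymm (Nat.sInf_le hmem) ?_
    have hne : {d0 | ∃ p', 2 ≤ F.childCount p' ∧ F.depth p' = d0}.Nonempty := ⟨q, hmem⟩
    obtain ⟨p', hp'1, hp'2⟩ := Nat.sInf_mem hne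
    exact hp'2 ▸ hlb p' hp'1
  have htopSep : F.topSep = S' := by
    rw [RootedForest.topSep, dif_pos hbr, hsInf]
    ext v
    simp only [Finset.mem_filter, Finset.mem_univ, true_and]
    constructor
    · intro hv
      by_contra hmem
      have h7 := hdeF_not_ge v hmem
      have h8 : deF v ≤ q := hv
      omega
    · intro hmem
      show deF v ≤ q
      rw [hdeF_mem v hmem]
      have := hidx_lt v
      omega
  exact ⟨F, hdecF, htreeF, hheightF, htopSep ▸ ⟨c1, c2, hS'sep, hS'min⟩⟩

end
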